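/- Let z: (-∞, t₀] → ℝ be a bounded solution of v'' + v' - 6v = f(v) with f continuous, f(0) = 0, |f(v)| ≤ C v² near 0, and z(t) → 0, z'(t) → 0 as t → -∞. Then there exists T ≤ t₀ and a constant M such that |z(t)| ≤ M e^{2t} for all t ≤ T. -/

import Mathlib

open Real Filter

lemma ftc_abs_bound {F F' b : ℝ → ℝ} {s t : ℝ} (hst : s ≤ t)
    (hF : ∀ x ∈ Set.Icc s t, HasDerivAt F (F' x) x)
    (hF'c : ContinuousOn F' (Set.Icc s t))
    (hbc : ContinuousOn b (Set.Icc s t))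
    (hle : ∀ x ∈ Set.Icc s t, |F' x| ≤ b x) :
    |F t - F s| ≤ ∫ x in s..t, b x := by
  have huIcc : Set.uIcc s t = Set.Icc s t := Set.uIcc_of_le hst
  have hInt : IntervalIntegrable F' MeasureTheory.volume s t := by
    apply ContinuousOn.intervalIntegrable; rwa [huIcc]
  have hIntb : IntervalIntegrable b MeasureTheory.volume s t := by
    apply ContinuousOn.intervalIntegrable; rwa [huIcc]
  have hIntAbs : IntervalIntegrable (fun x => |F' x|) MeasureTheory.volume s t := by
    apply ContinuousOn.intervalIntegrable; rw [huIcc]; exact hF'c.abs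
  have heq : ∫ x in s..t, F' x = F t - F s :=
    intervalIntegral.integral_eq_sub_of_hasDerivAt (by rw [huIcc]; exact hF) hInt
  rw [← heq]
  calc |∫ x in s..t, F' x| ≤ ∫ x in s..t, |F' x| := by
        simpa [Real.norm_eq_abs] using
          intervalIntegral.norm_integral_le_integral_norm (f := F')
            (μ := MeasureTheory.volume) (a := s) (b := t) hst
    _ ≤ ∫ x in s..t, b x := intervalIntegral.integral_mono_on hst hIntAbs hIntb hle

lemma integral_exp_mul' (k s t : ℝ) (hk : k ≠ 0) :
    ∫ x in s..t, Real.exp (k * x) = (Real.exp (k * t) - Real.exp (k * s)) / k := by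
  have h : ∀ x ∈ Set.uIcc s t, HasDerivAt (fun x => Real.exp (k * x) / k) (Real.exp (k * x)) x := by
    intro x _
    have h1 : HasDerivAt (fun x => Real.exp (k * x)) (Real.exp (k * x) * (k * 1)) x :=
      ((hasDerivAt_id x).const_mul k).exp
    have h2 := h1.div_const k
    have : Real.exp (k * x) * (k * 1) / k = Real.exp (k * x) := by field_simp
    rwa [this] at h2
  rw [intervalIntegral.integral_eq_sub_of_hasDerivAt h
    (Continuous.intervalIntegrable (by continuity) s t)]
  ring

/-- A bounded solution of `v'' + v' - 6v = f(v)` on `(-∞, t₀]` with `z, z' → 0` as `t → -∞`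
decays like `e^{2t}`: there are `T ≤ t₀` and `M` with `|z t| ≤ M e^{2t}` for `t ≤ T`. -/
theorem unstable_manifold_decay
    (t₀ : ℝ) (z : ℝ → ℝ) (f : ℝ → ℝ) (C : ℝ)
    (hf : Continuous f) (hf0 : f 0 = 0)
    (hfquad : ∃ ε > 0, ∀ v : ℝ, |v| ≤ ε → |f v| ≤ C * v ^ 2)
    (hz : ContDiffOn ℝ 2 z (Set.Iic t₀))
    (hbdd : ∃ K : ℝ, ∀ t ≤ t₀, |z t| ≤ K)
    (hode : ∀ t ≤ t₀, deriv (deriv z) t + deriv z t - 6 * z t = f (z t))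
    (hz0 : Filter.Tendsto z Filter.atBot (nhds 0))
    (hz'0 : Filter.Tendsto (deriv z) Filter.atBot (nhds 0)) :
    ∃ T ≤ t₀, ∃ M : ℝ, ∀ t ≤ T, |z t| ≤ M * Real.exp (2 * t) := by
  obtain ⟨ε, hε, hfq⟩ := hfquad
  obtain ⟨K, hK⟩ := hbdd
  set C' : ℝ := max C 0 with hC'def
  have hC'0 : 0 ≤ C' := le_max_right _ _
  have hfq' : ∀ v : ℝ, |v| ≤ ε → |f v| ≤ C' * v ^ 2 := fun v hv =>
    (hfq v hv).trans (by nlinarith [sq_nonneg v, le_max_left C 0])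
  -- choose T
  have hδpos : (0:ℝ) < min ε (1 / (4 * C' + 4)) := lt_min hε (by positivity)
  have hev : ∀ᶠ t in atBot, |z t| < min ε (1 / (4 * C' + 4)) := by
    have hmem : Metric.ball (0:ℝ) (min ε (1 / (4 * C' + 4))) ∈ nhds 0 :=
      Metric.ball_mem_nhds _ hδpos
    filter_upwards [hz0 hmem] with t ht
    simpa [Real.dist_eq] using ht
  obtain ⟨T₁, hT₁⟩ := eventually_atBot.mp hev
  set T : ℝ := min T₁ (t₀ - 1) with hTdef
  have hTt₀ : T < t₀ := lt_of_le_of_lt (min_le_right _ _) (by linarith)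
  have hsmall : ∀ t ≤ T, |z t| ≤ ε ∧ C' * |z t| ≤ 1/4 := by
    intro t ht
    have h := hT₁ t (ht.trans (min_le_left _ _))
    constructor
    · exact (le_of_lt h).trans (min_le_left _ _)
    · have h2 : |z t| ≤ 1/(4*C'+4) := (le_of_lt h).trans (min_le_right _ _)
      calc C' * |z t| ≤ C' * (1/(4*C'+4)) := mul_le_mul_of_nonneg_left h2 hC'0
        _ ≤ 1/4 := by
          rw [mul_one_div, div_le_div_iff₀ (by positivity) (by norm_num)]
          linarith
  have hfz : ∀ t ≤ T, |f (z t)| ≤ 1/4 * |z t| := by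
    intro t ht
    calc |f (z t)| ≤ C' * (z t)^2 := hfq' _ (hsmall t ht).1
      _ = (C' * |z t|) * |z t| := by rw [← sq_abs]; ring
      _ ≤ 1/4 * |z t| := mul_le_mul_of_nonneg_right (hsmall t ht).2 (abs_nonneg _)
  -- calculus setup
  have hzU : ContDiffOn ℝ 2 z (Set.Iio t₀) := hz.mono Set.Iio_subset_Iic_self
  have hz'U : ContDiffOn ℝ 1 (deriv z) (Set.Iio t₀) :=
    hzU.deriv_of_isOpen isOpen_Iio (by norm_num)
  have hdz : ∀ x < t₀, HasDerivAt z (deriv z x) x := fun x hx =>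
    ((hzU.contDiffAt (Iio_mem_nhds hx)).differentiableAt two_ne_zero).hasDerivAt
  have hdz' : ∀ x < t₀, HasDerivAt (deriv z) (deriv (deriv z) x) x := fun x hx =>
    ((hz'U.contDiffAt (Iio_mem_nhds hx)).differentiableAt one_ne_zero).hasDerivAt
  have hzc : ContinuousOn z (Set.Iio t₀) := hzU.continuousOn
  have hz'c : ContinuousOn (deriv z) (Set.Iio t₀) := hz'U.continuousOn
  set w : ℝ → ℝ := fun x => deriv z x - 2 * z x with hwdef
  have hwc : ContinuousOn w (Set.Iio t₀) := hz'c.sub (hzc.const_smul (2:ℝ))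
  have hw0 : Tendsto w atBot (nhds 0) := by
    have := hz'0.sub (hz0.const_mul (2:ℝ))
    simpa using this
  have hdw : ∀ x < t₀, HasDerivAt w (f (z x) - 3 * w x) x := by
    intro x hx
    have h := (hdz' x hx).sub ((hdz x hx).const_mul (2:ℝ))
    have he : deriv (deriv z) x - 2 * deriv z x = f (z x) - 3 * w x := by
      have h6 := hode x (le_of_lt hx)
      simp only [hwdef]; linarith
    rwa [he] at h
  have hdW : ∀ x < t₀, HasDerivAt (fun y => Real.exp (3*y) * w y) (Real.exp (3*x) * f (z x)) x := by
    intro x hx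
    have h1 : HasDerivAt (fun y : ℝ => Real.exp (3*y)) (Real.exp (3*x) * (3*1)) x :=
      ((hasDerivAt_id x).const_mul (3:ℝ)).exp
    have h2 := h1.fun_mul (hdw x hx)
    refine h2.congr_deriv ?_
    ring
  have hdY : ∀ x < t₀, HasDerivAt (fun y => Real.exp (-2*y) * z y) (Real.exp (-2*x) * w x) x := by
    intro x hx
    have h1 : HasDerivAt (fun y : ℝ => Real.exp (-2*y)) (Real.exp (-2*x) * (-2*1)) x :=
      ((hasDerivAt_id x).const_mul (-2:ℝ)).exp
    have h2 := h1.fun_mul (hdz x hx)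
    refine h2.congr_deriv ?_
    simp only [hwdef]; ring
  -- the sup function
  set S : ℝ → ℝ := fun t => sSup ((fun τ => |z τ|) '' Set.Iic t) with hSdef
  have hSbdd : ∀ t ≤ t₀, BddAbove ((fun τ => |z τ|) '' Set.Iic t) := fun t ht =>
    ⟨K, by rintro y ⟨τ, hτ, rfl⟩; exact hK τ (le_trans hτ ht)⟩
  have hSle : ∀ t ≤ t₀, ∀ s ≤ t, |z s| ≤ S t := fun t ht s hs =>
    le_csSup (hSbdd t ht) ⟨s, hs, rfl⟩
  have hS0 : ∀ t ≤ t₀, 0 ≤ S t := fun t ht => (abs_nonneg _).trans (hSle t ht t le_rfl)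
  have hSmono : ∀ s t : ℝ, s ≤ t → t ≤ t₀ → S s ≤ S t := by
    intro s t hst ht
    refine csSup_le ⟨_, ⟨s, Set.self_mem_Iic, rfl⟩⟩ ?_
    rintro y ⟨τ, hτ, rfl⟩
    exact le_csSup (hSbdd t ht) ⟨τ, le_trans hτ hst, rfl⟩
  -- the key w-estimate
  have hWlem : ∀ a : ℝ, 0 ≤ a → ∀ c : ℝ, 0 ≤ c → ∀ t ≤ T,
      (∀ τ ≤ t, |f (z τ)| ≤ c * Real.exp (a * τ)) → |w t| ≤ c / 3 * Real.exp (a * t) := by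
    intro a ha c hc t ht hbound
    have htt₀ : t < t₀ := lt_of_le_of_lt ht hTt₀
    have key : ∀ s ≤ t, |w t| ≤
        Real.exp (-(3*t)) * (Real.exp (3*s) * |w s|) + c / 3 * Real.exp (a*t) := by
      intro s hs
      have hIcc : Set.Icc s t ⊆ Set.Iio t₀ := fun x hx => lt_of_le_of_lt hx.2 htt₀
      have h1 : |Real.exp (3*t) * w t - Real.exp (3*s) * w s| ≤
          ∫ x in s..t, c * Real.exp ((3+a) * x) := by
        apply ftc_abs_bound hs
        · intro x hx; exact hdW x (hIcc hx)
        · exact ((Real.continuous_exp.comp (continuous_const.mul continuous_id)).comp_continuousOn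
            continuousOn_id).mul (hf.comp_continuousOn (hzc.mono hIcc))
        · exact (continuous_const.mul
            (Real.continuous_exp.comp (continuous_const.mul continuous_id))).continuousOn
        · intro x hx
          calc |Real.exp (3*x) * f (z x)| = Real.exp (3*x) * |f (z x)| := by
                rw [abs_mul, abs_of_pos (Real.exp_pos _)]
            _ ≤ Real.exp (3*x) * (c * Real.exp (a*x)) :=
                mul_le_mul_of_nonneg_left (hbound x hx.2) (Real.exp_pos _).le
            _ = c * Real.exp ((3+a)*x) := by
                rw [show (3+a)*x = 3*x + a*x by ring, Real.exp_add]; ring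
      have h2 : ∫ x in s..t, c * Real.exp ((3+a)*x) ≤ c / 3 * Real.exp ((3+a)*t) := by
        rw [intervalIntegral.integral_const_mul, integral_exp_mul' (3+a) s t (by linarith)]
        have hA : (Real.exp ((3+a)*t) - Real.exp ((3+a)*s))/(3+a) ≤ Real.exp ((3+a)*t)/3 := by
          have hEs := Real.exp_pos ((3+a)*s)
          have hEt := Real.exp_pos ((3+a)*t)
          apply div_le_div₀ (le_of_lt hEt) (by linarith) (by norm_num) (by linarith)
        calc c * ((Real.exp ((3+a)*t) - Real.exp ((3+a)*s))/(3+a))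
            ≤ c * (Real.exp ((3+a)*t)/3) := mul_le_mul_of_nonneg_left hA hc
          _ = c / 3 * Real.exp ((3+a)*t) := by ring
      have h3 : |Real.exp (3*t) * w t| ≤
          Real.exp (3*s) * |w s| + c/3 * Real.exp ((3+a)*t) := by
        have h4 := abs_sub_abs_le_abs_sub (Real.exp (3*t) * w t) (Real.exp (3*s) * w s)
        have h5 := h1.trans h2
        rw [abs_mul (Real.exp (3*s)), abs_of_pos (Real.exp_pos (3*s))] at h4
        linarith
      have h6 := mul_le_mul_of_nonneg_left h3 (Real.exp_pos (-(3*t))).le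
      calc |w t| = Real.exp (-(3*t)) * |Real.exp (3*t) * w t| := by
            rw [abs_mul, abs_of_pos (Real.exp_pos _), ← mul_assoc, ← Real.exp_add]
            simp
        _ ≤ Real.exp (-(3*t)) * (Real.exp (3*s) * |w s| + c/3 * Real.exp ((3+a)*t)) := h6
        _ = Real.exp (-(3*t)) * (Real.exp (3*s) * |w s|) + c/3 * Real.exp (a*t) := by
            rw [mul_add]
            congr 1
            rw [show (3+a)*t = 3*t + a*t by ring, Real.exp_add]
            rw [show -(3*t) = -(3*t) from rfl]
            field_simp [Real.exp_neg]
            rw [mul_right_comm, ← Real.exp_add]; simp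
    have h5 : Tendsto (fun s : ℝ => Real.exp (3*s)) atBot (nhds 0) :=
      Real.tendsto_exp_atBot.comp ((tendsto_const_mul_atBot_of_pos (by norm_num)).mpr tendsto_id)
    have h6 : Tendsto (fun s => Real.exp (3*s) * |w s|) atBot (nhds 0) := by
      have := h5.mul hw0.abs
      simpa using this
    have hlim : Tendsto (fun s => Real.exp (-(3*t)) * (Real.exp (3*s) * |w s|)
        + c/3 * Real.exp (a*t)) atBot (nhds (c/3 * Real.exp (a*t))) := by
      have := (h6.const_mul (Real.exp (-(3*t)))).add_const (c/3 * Real.exp (a*t))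
      simpa using this
    exact ge_of_tendsto hlim (by filter_upwards [eventually_le_atBot t] with s hs using key s hs)
  -- |f(z τ)| ≤ S t / 4 for τ ≤ t ≤ T
  have hfzS : ∀ t ≤ T, ∀ τ ≤ t, |f (z τ)| ≤ (S t / 4) * Real.exp (0 * τ) := by
    intro t ht τ hτ
    rw [zero_mul, Real.exp_zero, mul_one]
    calc |f (z τ)| ≤ 1/4 * |z τ| := hfz τ (hτ.trans ht)
      _ ≤ 1/4 * S t := by
          apply mul_le_mul_of_nonneg_left _ (by norm_num)
          exact hSle t (ht.trans hTt₀.le) τ hτ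
      _ = S t / 4 := by ring
  have hwS : ∀ t ≤ T, |w t| ≤ S t / 12 := by
    intro t ht
    have hSt0 : 0 ≤ S t := hS0 t (ht.trans hTt₀.le)
    have := hWlem 0 le_rfl (S t / 4) (by linarith) t ht (hfzS t ht)
    rw [zero_mul, Real.exp_zero, mul_one] at this
    linarith
  -- S t ≤ 2 |z t|
  have hSz : ∀ t ≤ T, S t ≤ 2 * |z t| := by
    intro t ht
    have htt₀ : t < t₀ := lt_of_le_of_lt ht hTt₀
    have hSt0 : 0 ≤ S t := hS0 t htt₀.le
    have key : ∀ s ≤ t, |z s| ≤ |z t| + S t / 24 := by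
      intro s hs
      have hIcc : Set.Icc s t ⊆ Set.Iio t₀ := fun x hx => lt_of_le_of_lt hx.2 htt₀
      have h1 : |Real.exp (-2*t) * z t - Real.exp (-2*s) * z s| ≤
          ∫ x in s..t, (S t / 12) * Real.exp (-2*x) := by
        apply ftc_abs_bound hs
        · intro x hx; exact hdY x (hIcc hx)
        · exact ((Real.continuous_exp.comp
            (continuous_const.mul continuous_id)).continuousOn).mul (hwc.mono hIcc)
        · exact (continuous_const.mul
            (Real.continuous_exp.comp (continuous_const.mul continuous_id))).continuousOn
        · intro x hx
          have hxT : x ≤ T := hx.2.trans ht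
          calc |Real.exp (-2*x) * w x| = Real.exp (-2*x) * |w x| := by
                rw [abs_mul, abs_of_pos (Real.exp_pos _)]
            _ ≤ Real.exp (-2*x) * (S t / 12) := by
                apply mul_le_mul_of_nonneg_left _ (Real.exp_pos _).le
                exact (hwS x hxT).trans (by
                  have := hSmono x t hx.2 htt₀.le
                  linarith)
            _ = (S t / 12) * Real.exp (-2*x) := by ring
      have h2 : ∫ x in s..t, (S t / 12) * Real.exp (-2*x) ≤ S t / 24 * Real.exp (-2*s) := by
        rw [intervalIntegral.integral_const_mul, integral_exp_mul' (-2) s t (by norm_num)]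
        have hEt := Real.exp_pos (-2*t)
        have hA : (Real.exp (-2*t) - Real.exp (-2*s))/(-2) ≤ Real.exp (-2*s)/2 := by
          rw [show (Real.exp (-2*t) - Real.exp (-2*s))/(-2)
            = (Real.exp (-2*s) - Real.exp (-2*t))/2 by ring]
          linarith
        calc S t / 12 * ((Real.exp (-2*t) - Real.exp (-2*s))/(-2))
            ≤ S t / 12 * (Real.exp (-2*s)/2) :=
              mul_le_mul_of_nonneg_left hA (by linarith)
          _ = S t / 24 * Real.exp (-2*s) := by ring
      have h3 : |Real.exp (-2*s) * z s| ≤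
          |Real.exp (-2*t) * z t| + S t / 24 * Real.exp (-2*s) := by
        have h4 := abs_sub_abs_le_abs_sub (Real.exp (-2*s) * z s) (Real.exp (-2*t) * z t)
        rw [abs_sub_comm] at h4
        linarith [h1.trans h2]
      rw [abs_mul, abs_mul, abs_of_pos (Real.exp_pos (-2*s)), abs_of_pos (Real.exp_pos (-2*t))]
        at h3
      have h5 := mul_le_mul_of_nonneg_left h3 (Real.exp_pos (2*s)).le
      have e1 : Real.exp (2*s) * (Real.exp (-2*s) * |z s|) = |z s| := by
        rw [← mul_assoc, ← Real.exp_add]; norm_num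
      have e2 : Real.exp (2*s) * (Real.exp (-2*t) * |z t| + S t / 24 * Real.exp (-2*s))
          ≤ |z t| + S t / 24 := by
        rw [mul_add]
        have e3 : Real.exp (2*s) * (Real.exp (-2*t) * |z t|) ≤ |z t| := by
          rw [← mul_assoc, ← Real.exp_add]
          have : Real.exp (2*s + -2*t) ≤ 1 := Real.exp_le_one_iff.mpr (by linarith)
          nlinarith [abs_nonneg (z t)]
        have e4 : Real.exp (2*s) * (S t / 24 * Real.exp (-2*s)) = S t / 24 := by
          rw [show Real.exp (2*s) * (S t / 24 * Real.exp (-2*s))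
            = (Real.exp (2*s) * Real.exp (-2*s)) * (S t / 24) by ring, ← Real.exp_add]
          norm_num
        linarith
      rw [e1] at h5
      exact h5.trans e2
    have hle : S t ≤ |z t| + S t / 24 :=
      csSup_le ⟨_, ⟨t, Set.self_mem_Iic, rfl⟩⟩ (by rintro y ⟨s, hs, rfl⟩; exact key s hs)
    linarith
  have hwz : ∀ t ≤ T, |w t| ≤ |z t| / 2 := by
    intro t ht
    have := hwS t ht
    have := hSz t ht
    have := abs_nonneg (z t)
    linarith
  -- preliminary decay rate 3/2 via monotonicity of G
  set G : ℝ → ℝ := fun x => Real.exp x * (Real.exp (-2*x) * z x)^2 with hGdef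
  have hdG : ∀ x < t₀, HasDerivAt G (Real.exp x * ((Real.exp (-2*x) * z x)^2
      + 2 * (Real.exp (-2*x) * z x) * (Real.exp (-2*x) * w x))) x := by
    intro x hx
    have h1 := (hdY x hx).fun_pow 2
    have h2 := (Real.hasDerivAt_exp x).fun_mul h1
    refine h2.congr_deriv ?_
    norm_num
    ring
  have hGmono : ∀ s ≤ T, G s ≤ G T := by
    intro s hsT
    have hsub : Set.Icc s T ⊆ Set.Iio t₀ := fun x hx => lt_of_le_of_lt hx.2 hTt₀
    have hmono := monotoneOn_of_deriv_nonneg (convex_Icc s T)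
      (fun x hx => ((hdG x (hsub hx)).differentiableAt).continuousAt.continuousWithinAt)
      (fun x hx => ((hdG x (hsub (interior_subset hx))).differentiableAt).differentiableWithinAt)
      (by
        intro x hx
        rw [interior_Icc] at hx
        have hxT : x ≤ T := hx.2.le
        have hxt₀ : x < t₀ := lt_of_le_of_lt hxT hTt₀
        rw [(hdG x hxt₀).deriv]
        apply mul_nonneg (Real.exp_pos _).le
        set p := Real.exp (-2*x) * z x
        set q := Real.exp (-2*x) * w x
        have hq : |q| ≤ |p| / 2 := by
          have h3 : |q| = Real.exp (-2*x) * |w x| := by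
            rw [abs_mul, abs_of_pos (Real.exp_pos _)]
          have h4 : |p| = Real.exp (-2*x) * |z x| := by
            rw [abs_mul, abs_of_pos (Real.exp_pos _)]
          rw [h3, h4]
          have := hwz x hxT
          nlinarith [Real.exp_pos (-2*x)]
        have h5 : -(|p| * |q|) ≤ p * q := by rw [← abs_mul]; exact neg_abs_le _
        nlinarith [abs_nonneg p, sq_abs p])
    exact hmono ⟨le_rfl, hsT⟩ ⟨hsT, le_rfl⟩ hsT
  set A : ℝ := Real.exp (-(3/2)*T) * |z T| with hAdef
  have hA0 : 0 ≤ A := by positivity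
  have hz32 : ∀ s ≤ T, |z s| ≤ A * Real.exp (3/2 * s) := by
    intro s hsT
    have hGs : Real.exp s * (Real.exp (-2*s) * z s)^2
        ≤ Real.exp T * (Real.exp (-2*T) * z T)^2 := hGmono s hsT
    have h7 : (Real.exp (-2*s) * z s)^2
        ≤ Real.exp (T - s) * (Real.exp (-2*T) * z T)^2 := by
      have h6 := mul_le_mul_of_nonneg_left hGs (Real.exp_pos (-s)).le
      rw [← mul_assoc, ← Real.exp_add, ← mul_assoc, ← Real.exp_add] at h6
      simp only [neg_add_cancel, Real.exp_zero, one_mul] at h6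
      rw [show T - s = -s + T by ring]
      exact h6
    have hhh : (Real.exp ((T-s)/2))^2 = Real.exp (T-s) := by
      rw [sq, ← Real.exp_add]; congr 1; ring
    have h9 : (Real.exp (-2*s) * z s)^2
        ≤ (Real.exp ((T-s)/2) * |Real.exp (-2*T) * z T|)^2 := by
      rw [show (Real.exp ((T-s)/2) * |Real.exp (-2*T) * z T|)^2
        = Real.exp (T-s) * (Real.exp (-2*T) * z T)^2 by rw [mul_pow, hhh, sq_abs]]
      exact h7
    have h8 : |Real.exp (-2*s) * z s| ≤ Real.exp ((T-s)/2) * |Real.exp (-2*T) * z T| := by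
      calc |Real.exp (-2*s) * z s| = Real.sqrt ((Real.exp (-2*s) * z s)^2) :=
            (Real.sqrt_sq_eq_abs _).symm
        _ ≤ Real.sqrt ((Real.exp ((T-s)/2) * |Real.exp (-2*T) * z T|)^2) :=
            Real.sqrt_le_sqrt h9
        _ = Real.exp ((T-s)/2) * |Real.exp (-2*T) * z T| := Real.sqrt_sq (by positivity)
    calc |z s| = Real.exp (2*s) * |Real.exp (-2*s) * z s| := by
          rw [abs_mul, abs_of_pos (Real.exp_pos _), ← mul_assoc, ← Real.exp_add]
          norm_num
      _ ≤ Real.exp (2*s) * (Real.exp ((T-s)/2) * |Real.exp (-2*T) * z T|) :=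
          mul_le_mul_of_nonneg_left h8 (Real.exp_pos _).le
      _ = A * Real.exp (3/2 * s) := by
          rw [hAdef, abs_mul, abs_of_pos (Real.exp_pos (-2*T))]
          rw [show Real.exp (2*s) * (Real.exp ((T-s)/2) * (Real.exp (-2*T) * |z T|))
            = (Real.exp (2*s) * Real.exp ((T-s)/2) * Real.exp (-2*T)) * |z T| by ring,
            ← Real.exp_add, ← Real.exp_add,
            show Real.exp (-(3/2)*T) * |z T| * Real.exp (3/2*s)
            = (Real.exp (-(3/2)*T) * Real.exp (3/2*s)) * |z T| by ring, ← Real.exp_add]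
          congr 2
          ring
  -- bootstrap: quadratic bound on f ∘ z
  have hquad2 : ∀ τ ≤ T, |f (z τ)| ≤ (C' * A^2) * Real.exp (3*τ) := by
    intro τ hτ
    have hees : (Real.exp (3/2*τ))^2 = Real.exp (3*τ) := by
      rw [sq, ← Real.exp_add]; congr 1; ring
    calc |f (z τ)| ≤ C' * (z τ)^2 := hfq' _ (hsmall τ hτ).1
      _ = C' * |z τ|^2 := by rw [sq_abs]
      _ ≤ C' * (A * Real.exp (3/2*τ))^2 :=
          mul_le_mul_of_nonneg_left (pow_le_pow_left₀ (abs_nonneg _) (hz32 τ hτ) 2) hC'0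
      _ = (C' * A^2) * Real.exp (3*τ) := by rw [mul_pow, hees]; ring
  have hB : ∀ t ≤ T, |w t| ≤ (C' * A^2)/3 * Real.exp (3*t) := fun t ht =>
    hWlem 3 (by norm_num) _ (by positivity) t ht (fun τ hτ => hquad2 τ (hτ.trans ht))
  -- conclusion
  refine ⟨T, hTt₀.le, Real.exp (-2*T) * |z T| + (C' * A^2)/3 * Real.exp T, ?_⟩
  intro s hs
  have hIcc : Set.Icc s T ⊆ Set.Iio t₀ := fun x hx => lt_of_le_of_lt hx.2 hTt₀
  have h1 : |Real.exp (-2*T) * z T - Real.exp (-2*s) * z s| ≤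
      ∫ x in s..T, ((C' * A^2)/3) * Real.exp x := by
    apply ftc_abs_bound (F := fun y => Real.exp (-2*y) * z y)
      (F' := fun x => Real.exp (-2*x) * w x) hs
    · intro x hx; exact hdY x (hIcc hx)
    · exact ((Real.continuous_exp.comp
        (continuous_const.mul continuous_id)).continuousOn).mul (hwc.mono hIcc)
    · exact (continuous_const.mul Real.continuous_exp).continuousOn
    · intro x hx
      calc |Real.exp (-2*x) * w x| = Real.exp (-2*x) * |w x| := by
            rw [abs_mul, abs_of_pos (Real.exp_pos _)]
        _ ≤ Real.exp (-2*x) * ((C' * A^2)/3 * Real.exp (3*x)) :=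
            mul_le_mul_of_nonneg_left (hB x hx.2) (Real.exp_pos _).le
        _ = ((C' * A^2)/3) * Real.exp x := by
            rw [show Real.exp (-2*x) * ((C' * A^2)/3 * Real.exp (3*x))
              = (Real.exp (-2*x) * Real.exp (3*x)) * ((C' * A^2)/3) by ring, ← Real.exp_add]
            rw [show -2*x + 3*x = x by ring]
            ring
  have h2 : ∫ x in s..T, ((C' * A^2)/3) * Real.exp x ≤ (C' * A^2)/3 * Real.exp T := by
    rw [intervalIntegral.integral_const_mul, integral_exp]
    have := Real.exp_pos s
    have hCA : 0 ≤ (C' * A^2)/3 := by positivity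
    nlinarith
  have h3 : |Real.exp (-2*s) * z s| ≤
      |Real.exp (-2*T) * z T| + (C' * A^2)/3 * Real.exp T := by
    have h4 := abs_sub_abs_le_abs_sub (Real.exp (-2*s) * z s) (Real.exp (-2*T) * z T)
    rw [abs_sub_comm] at h4
    linarith [h1.trans h2]
  rw [abs_mul, abs_mul, abs_of_pos (Real.exp_pos (-2*s)), abs_of_pos (Real.exp_pos (-2*T))] at h3
  have h5 := mul_le_mul_of_nonneg_left h3 (Real.exp_pos (2*s)).le
  have e1 : Real.exp (2*s) * (Real.exp (-2*s) * |z s|) = |z s| := by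
    rw [← mul_assoc, ← Real.exp_add]; norm_num
  rw [e1] at h5
  calc |z s| ≤ Real.exp (2*s) * (Real.exp (-2*T) * |z T| + (C' * A^2)/3 * Real.exp T) := h5
    _ = (Real.exp (-2*T) * |z T| + (C' * A^2)/3 * Real.exp T) * Real.exp (2*s) := by ring
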